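/- Let λ ≠ 0 and -1 < w < 1 be real constants, and consider the quintessence system x' = -(3/2)[2x + (w-1)x³ + x(w+1)(y²-1) - √(2/3)λy²], y' = -(3/2)y[(w-1)x² + (w+1)(y²-1) + √(2/3)λx]. The scaling point B = (√(3/2)(1+w)/λ, √(3(1-w²))/(√2 λ)) is a zero of the vector field, and the characteristic polynomial of the Jacobian matrix at B is μ² - (3/2)(w-1)μ + (9(1-w²)/(2λ²))(λ² - 3(1+w)); equivalently its eigenvalues are (3/(4λ))[(w-1)λ ± √((w-1)((7+9w)λ² - 24(w+1)²))]. Consequently both eigenvalues have negative real part if and only if λ² > 3(1+w), in which case B is a hyperbolic sink. -/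

import Mathlib

open Polynomial

set_option maxHeartbeats 1000000

/-- `x`-component of the quintessence (exponential potential) vector field. -/
noncomputable def q6x (w lam x y : ℝ) : ℝ :=
  -(3 / 2) * (2 * x + (w - 1) * x ^ 3 + x * (w + 1) * (y ^ 2 - 1)
    - Real.sqrt (2 / 3) * lam * y ^ 2)

/-- `y`-component of the quintessence (exponential potential) vector field. -/
noncomputable def q6y (w lam x y : ℝ) : ℝ :=
  -(3 / 2) * y * ((w - 1) * x ^ 2 + (w + 1) * (y ^ 2 - 1) + Real.sqrt (2 / 3) * lam * x)

/-- The scaling critical point `B`. -/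
noncomputable def B6 (w lam : ℝ) : ℝ × ℝ :=
  (Real.sqrt (3 / 2) * (1 + w) / lam, Real.sqrt (3 * (1 - w ^ 2)) / (Real.sqrt 2 * lam))

/-- Jacobian matrix of the quintessence vector field at a point `p`. -/
noncomputable def jac6 (w lam : ℝ) (p : ℝ × ℝ) : Matrix (Fin 2) (Fin 2) ℝ :=
  !![deriv (fun x => q6x w lam x p.2) p.1, deriv (fun y => q6x w lam p.1 y) p.2;
     deriv (fun x => q6y w lam x p.2) p.1, deriv (fun y => q6y w lam p.1 y) p.2]

lemma q6d11 (w lam y x : ℝ) :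
    deriv (fun t => q6x w lam t y) x
      = -(3 / 2) * (2 + 3 * (w - 1) * x ^ 2 + (w + 1) * (y ^ 2 - 1)) := by
  have h : HasDerivAt (fun t => q6x w lam t y)
      (-(3 / 2) * (2 + 3 * (w - 1) * x ^ 2 + (w + 1) * (y ^ 2 - 1))) x := by
    unfold q6x
    exact ((((((hasDerivAt_id x).const_mul 2).add
      ((hasDerivAt_pow 3 x).const_mul (w - 1))).add
      (((hasDerivAt_id x).mul_const (w + 1)).mul_const (y ^ 2 - 1))).sub_const
      (Real.sqrt (2 / 3) * lam * y ^ 2)).const_mul (-(3 / 2))).congr_deriv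
      (by push_cast; ring)
  exact h.deriv

lemma q6d12 (w lam x y : ℝ) :
    deriv (fun t => q6x w lam x t) y
      = -(3 / 2) * (2 * x * (w + 1) * y - 2 * Real.sqrt (2 / 3) * lam * y) := by
  have h : HasDerivAt (fun t => q6x w lam x t)
      (-(3 / 2) * (2 * x * (w + 1) * y - 2 * Real.sqrt (2 / 3) * lam * y)) y := by
    unfold q6x
    exact ((((hasDerivAt_const y (2 * x + (w - 1) * x ^ 3)).add
      ((((hasDerivAt_pow 2 y).sub_const 1).const_mul (x * (w + 1))))).sub
      ((hasDerivAt_pow 2 y).const_mul (Real.sqrt (2 / 3) * lam))).const_mul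
      (-(3 / 2))).congr_deriv (by push_cast; ring)
  exact h.deriv

lemma q6d21 (w lam y x : ℝ) :
    deriv (fun t => q6y w lam t y) x
      = -(3 / 2) * y * (2 * (w - 1) * x + Real.sqrt (2 / 3) * lam) := by
  have h : HasDerivAt (fun t => q6y w lam t y)
      (-(3 / 2) * y * (2 * (w - 1) * x + Real.sqrt (2 / 3) * lam)) x := by
    unfold q6y
    exact (((((hasDerivAt_pow 2 x).const_mul (w - 1)).add_const
      ((w + 1) * (y ^ 2 - 1))).add
      ((hasDerivAt_id x).const_mul (Real.sqrt (2 / 3) * lam))).const_mul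
      (-(3 / 2) * y)).congr_deriv (by push_cast; ring)
  exact h.deriv

lemma q6d22 (w lam x y : ℝ) :
    deriv (fun t => q6y w lam x t) y
      = -(3 / 2) * ((w - 1) * x ^ 2 + (w + 1) * (3 * y ^ 2 - 1)
          + Real.sqrt (2 / 3) * lam * x) := by
  have h : HasDerivAt (fun t => q6y w lam x t)
      (-(3 / 2) * ((w - 1) * x ^ 2 + (w + 1) * (3 * y ^ 2 - 1)
          + Real.sqrt (2 / 3) * lam * x)) y := by
    unfold q6y
    exact (((hasDerivAt_id y).const_mul (-(3 / 2))).mul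
      (((hasDerivAt_const y ((w - 1) * x ^ 2)).add
        (((hasDerivAt_pow 2 y).sub_const 1).const_mul (w + 1))).add_const
        (Real.sqrt (2 / 3) * lam * x))).congr_deriv
      (by simp only [id_eq, Pi.add_apply]; push_cast; ring)
  exact h.deriv

/-- The scaling point `B` is a fixed point of the quintessence system; the characteristic
polynomial of its Jacobian is `μ² - (3/2)(w-1)μ + (9(1-w²)/(2λ²))(λ²-3(1+w))`, and both
eigenvalues have negative real part iff `λ² > 3(1+w)` (hyperbolic sink). -/
theorem quintessence_point_B_stability (w lam : ℝ) (hlam : lam ≠ 0)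
    (hw1 : -1 < w) (hw2 : w < 1) :
    (q6x w lam (B6 w lam).1 (B6 w lam).2 = 0 ∧ q6y w lam (B6 w lam).1 (B6 w lam).2 = 0) ∧
    (jac6 w lam (B6 w lam)).charpoly
      = X ^ 2 - C (3 / 2 * (w - 1)) * X
          + C (9 * (1 - w ^ 2) / (2 * lam ^ 2) * (lam ^ 2 - 3 * (1 + w))) ∧
    ((∀ μ : ℂ,
        μ ^ 2 - 3 / 2 * ((w : ℂ) - 1) * μ
            + 9 * (1 - (w : ℂ) ^ 2) / (2 * (lam : ℂ) ^ 2) * ((lam : ℂ) ^ 2 - 3 * (1 + (w : ℂ)))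
          = 0 → μ.re < 0) ↔ 3 * (1 + w) < lam ^ 2) := by
  set x0 : ℝ := Real.sqrt (3 / 2) * (1 + w) / lam with hx0def
  set y0 : ℝ := Real.sqrt (3 * (1 - w ^ 2)) / (Real.sqrt 2 * lam) with hy0def
  have hB1 : (B6 w lam).1 = x0 := rfl
  have hB2 : (B6 w lam).2 = y0 := rfl
  have hw2sq : (0:ℝ) ≤ 3 * (1 - w ^ 2) := by nlinarith
  have hx2 : x0 ^ 2 = 3 * (1 + w) ^ 2 / (2 * lam ^ 2) := by
    rw [hx0def, div_pow, mul_pow, Real.sq_sqrt (by norm_num : (0:ℝ) ≤ 3 / 2)]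
    ring
  have hy2 : y0 ^ 2 = 3 * (1 - w ^ 2) / (2 * lam ^ 2) := by
    rw [hy0def, div_pow, mul_pow, Real.sq_sqrt (by norm_num : (0:ℝ) ≤ 2),
      Real.sq_sqrt hw2sq]
  have h23 : Real.sqrt (2 / 3) * Real.sqrt (3 / 2) = 1 := by
    rw [← Real.sqrt_mul (by norm_num : (0:ℝ) ≤ 2 / 3)]
    norm_num
  have hsx : Real.sqrt (2 / 3) * lam * x0 = 1 + w := by
    rw [hx0def]
    field_simp
    nlinarith [h23]
  have hs2 : Real.sqrt (2 / 3) ^ 2 = 2 / 3 := Real.sq_sqrt (by norm_num)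
  have hs0 : Real.sqrt (2 / 3) ≠ 0 := by positivity
  -- fixed point
  have hbx : 2 * x0 + (w - 1) * x0 ^ 3 + x0 * (w + 1) * (y0 ^ 2 - 1)
      - Real.sqrt (2 / 3) * lam * y0 ^ 2 = 0 := by
    have hG : Real.sqrt (2 / 3) * lam * (2 * x0 + (w - 1) * x0 ^ 3
        + x0 * (w + 1) * (y0 ^ 2 - 1) - Real.sqrt (2 / 3) * lam * y0 ^ 2) = 0 := by
      have expand : Real.sqrt (2 / 3) * lam * (2 * x0 + (w - 1) * x0 ^ 3
          + x0 * (w + 1) * (y0 ^ 2 - 1) - Real.sqrt (2 / 3) * lam * y0 ^ 2)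
          = 2 * (Real.sqrt (2 / 3) * lam * x0)
            + (w - 1) * (Real.sqrt (2 / 3) * lam * x0) * x0 ^ 2
            + (w + 1) * (Real.sqrt (2 / 3) * lam * x0) * (y0 ^ 2 - 1)
            - lam ^ 2 * Real.sqrt (2 / 3) ^ 2 * y0 ^ 2 := by ring
      rw [expand, hsx, hx2, hy2, hs2]
      field_simp
      ring
    have := mul_eq_zero.mp hG
    rcases this with h | h
    · exact absurd h (mul_ne_zero hs0 hlam)
    · exact h
  have hby : (w - 1) * x0 ^ 2 + (w + 1) * (y0 ^ 2 - 1) + Real.sqrt (2 / 3) * lam * x0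
      = 0 := by
    rw [hx2, hy2, hsx]
    field_simp
    ring
  refine ⟨⟨?_, ?_⟩, ?_, ?_⟩
  · rw [hB1, hB2]; unfold q6x; rw [hbx, mul_zero]
  · rw [hB1, hB2]; unfold q6y; rw [hby, mul_zero]
  · -- charpoly
    have hM : jac6 w lam (B6 w lam)
        = !![-(3 / 2) * (2 + 3 * (w - 1) * x0 ^ 2 + (w + 1) * (y0 ^ 2 - 1)),
             -(3 / 2) * (2 * x0 * (w + 1) * y0 - 2 * Real.sqrt (2 / 3) * lam * y0);
             -(3 / 2) * y0 * (2 * (w - 1) * x0 + Real.sqrt (2 / 3) * lam),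
             -(3 / 2) * ((w - 1) * x0 ^ 2 + (w + 1) * (3 * y0 ^ 2 - 1)
               + Real.sqrt (2 / 3) * lam * x0)] := by
      unfold jac6
      rw [hB1, hB2, q6d11, q6d12, q6d21, q6d22]
    set a : ℝ := -(3 / 2) * (2 + 3 * (w - 1) * x0 ^ 2 + (w + 1) * (y0 ^ 2 - 1)) with ha
    set b : ℝ := -(3 / 2) * (2 * x0 * (w + 1) * y0 - 2 * Real.sqrt (2 / 3) * lam * y0)
      with hb
    set c : ℝ := -(3 / 2) * y0 * (2 * (w - 1) * x0 + Real.sqrt (2 / 3) * lam) with hc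
    set d : ℝ := -(3 / 2) * ((w - 1) * x0 ^ 2 + (w + 1) * (3 * y0 ^ 2 - 1)
      + Real.sqrt (2 / 3) * lam * x0) with hd
    have hcp : (jac6 w lam (B6 w lam)).charpoly
        = X ^ 2 - C (a + d) * X + C (a * d - b * c) := by
      rw [hM, Matrix.charpoly, Matrix.det_fin_two]
      simp [Matrix.charmatrix_apply_eq, Matrix.charmatrix_apply_ne, map_add, map_mul, map_sub]
      ring
    have htr : a + d = 3 / 2 * (w - 1) := by
      rw [ha, hd, hx2, hy2, hsx]
      field_simp
      ring
    have hdet : a * d - b * c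
        = 9 * (1 - w ^ 2) / (2 * lam ^ 2) * (lam ^ 2 - 3 * (1 + w)) := by
      have hbc : b * c = 9 / 4 * y0 ^ 2 * (4 * (w ^ 2 - 1) * x0 ^ 2
          + (2 * (w + 1) - 4 * (w - 1)) * (Real.sqrt (2 / 3) * lam * x0)
          - 2 * lam ^ 2 * Real.sqrt (2 / 3) ^ 2) := by
        rw [hb, hc]; ring
      rw [hbc, ha, hd, hx2, hy2, hsx, hs2]
      field_simp
      ring
    rw [hcp, htr, hdet]
  · -- eigenvalues
    set cc : ℝ := 9 * (1 - w ^ 2) / (2 * lam ^ 2) * (lam ^ 2 - 3 * (1 + w)) with hcc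
    have hK : (0:ℝ) < 9 * (1 - w ^ 2) / (2 * lam ^ 2) := by
      have h1 : (0:ℝ) < 1 - w ^ 2 := by nlinarith
      have h2 : (0:ℝ) < lam ^ 2 := by positivity
      positivity
    have hbpos : (0:ℝ) < 3 / 2 * (1 - w) := by nlinarith
    constructor
    · intro H
      by_contra hle
      push_neg at hle
      have hcle : cc ≤ 0 := by
        rw [hcc]
        apply mul_nonpos_of_nonneg_of_nonpos (le_of_lt hK)
        linarith
      set bb : ℝ := 3 / 2 * (1 - w) with hbb
      have hD : (0:ℝ) ≤ bb ^ 2 - 4 * cc := by nlinarith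
      set r : ℝ := Real.sqrt (bb ^ 2 - 4 * cc) with hr
      have hr2 : r ^ 2 = bb ^ 2 - 4 * cc := Real.sq_sqrt hD
      have hrb : bb ≤ r := by
        have : Real.sqrt (bb ^ 2) ≤ r := Real.sqrt_le_sqrt (by nlinarith)
        rwa [Real.sqrt_sq (le_of_lt hbpos)] at this
      have hreal : ((r - bb) / 2) ^ 2 - 3 / 2 * (w - 1) * ((r - bb) / 2) + cc = 0 := by
        have : 3 / 2 * (w - 1) = -bb := by rw [hbb]; ring
        rw [this]
        linear_combination hr2 / 4
      have hμ := H (((r - bb) / 2 : ℝ) : ℂ)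
      have heqc : (((r - bb) / 2 : ℝ) : ℂ) ^ 2
          - 3 / 2 * ((w : ℂ) - 1) * (((r - bb) / 2 : ℝ) : ℂ)
          + 9 * (1 - (w : ℂ) ^ 2) / (2 * (lam : ℂ) ^ 2)
            * ((lam : ℂ) ^ 2 - 3 * (1 + (w : ℂ))) = 0 := by
        have hcast := congrArg (fun t : ℝ => (t : ℂ)) hreal
        push_cast at hcast
        rw [hcc] at hcast
        push_cast at hcast
        have hl2 : ((lam : ℂ)) ≠ 0 := by exact_mod_cast hlam
        push_cast
        field_simp at hcast ⊢
        linear_combination hcast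
      have := hμ heqc
      rw [Complex.ofReal_re] at this
      nlinarith
    · intro hgt μ hμeq
      have hcpos : (0:ℝ) < cc := by
        rw [hcc]
        apply mul_pos hK
        linarith
      set bb : ℝ := 3 / 2 * (1 - w) with hbb
      have heq' : μ ^ 2 + (bb : ℂ) * μ + (cc : ℂ) = 0 := by
        rw [← hμeq, hbb, hcc]
        have hl2 : ((lam : ℂ)) ≠ 0 := by exact_mod_cast hlam
        push_cast
        field_simp
        ring
      have hre : μ.re ^ 2 - μ.im ^ 2 + bb * μ.re + cc = 0 := by
        have := congrArg Complex.re heq'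
        simpa [pow_two, Complex.add_re, Complex.mul_re, Complex.ofReal_re,
          Complex.ofReal_im] using this
      have him : 2 * μ.re * μ.im + bb * μ.im = 0 := by
        have := congrArg Complex.im heq'
        simp [pow_two, Complex.add_im, Complex.mul_im, Complex.ofReal_re,
          Complex.ofReal_im] at this
        linarith
      by_contra hge
      push_neg at hge
      have him2 : μ.im ^ 2 * (2 * μ.re + bb) = 0 := by linear_combination μ.im * him
      have himz : μ.im = 0 := by
        have hpos : (0:ℝ) < 2 * μ.re + bb := by linarith
        rcases mul_eq_zero.mp him2 with h | h
        · exact pow_eq_zero_iff (n := 2) (by norm_num) |>.mp h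
        · linarith
      rw [himz] at hre
      nlinarith
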